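/- Let G be a symmetric positive definite matrix, H symmetric with κ_min·G ⪯ H, and let β̂, β* ∈ ℝ^d satisfy S = H(β̂ - β*) for some vector S. Then for every vector φ, |φ^T β̂ - φ^T β*| ≤ κ_min^{-1} · ‖S‖_{G^{-1}} · ‖φ‖_{G^{-1}}, where ‖x‖_M = sqrt(x^T M x). -/

import Mathlib

open Matrix

lemma cs_pd {d : ℕ} (G : Matrix (Fin d) (Fin d) ℝ) (hG : G.PosDef)
    (x y : Fin d → ℝ) :
    (x ⬝ᵥ y)^2 ≤ (x ⬝ᵥ G *ᵥ x) * (y ⬝ᵥ G⁻¹ *ᵥ y) := by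
  have hGinv := hG.inv
  have hGunit : IsUnit G.det := isUnit_iff_ne_zero.mpr hG.det_pos.ne'
  have hsym : Gᵀ = G := by
    rw [← conjTranspose_eq_transpose_of_trivial]; exact hG.1
  by_cases hy : y = 0
  · simp [hy]
  · set c := y ⬝ᵥ G⁻¹ *ᵥ y with hc
    have hcpos : 0 < c := by have := hGinv.dotProduct_mulVec_pos hy; rwa [star_trivial] at this
    set z := c • x - (x ⬝ᵥ y) • (G⁻¹ *ᵥ y) with hz
    have h1 : G *ᵥ (G⁻¹ *ᵥ y) = y := by
      rw [mulVec_mulVec, Matrix.mul_nonsing_inv _ hGunit, one_mulVec]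
    have h2 : (G⁻¹ *ᵥ y) ⬝ᵥ (G *ᵥ x) = y ⬝ᵥ x := by
      rw [dotProduct_mulVec, ← mulVec_transpose, hsym, mulVec_mulVec,
        Matrix.mul_nonsing_inv _ hGunit, one_mulVec]
    have h3 : (G⁻¹ *ᵥ y) ⬝ᵥ y = c := by rw [hc, dotProduct_comm]
    have hxy : x ⬝ᵥ y = y ⬝ᵥ x := dotProduct_comm _ _
    have hexp : z ⬝ᵥ G *ᵥ z = c * (c * (x ⬝ᵥ G *ᵥ x) - (x ⬝ᵥ y)^2) := by
      simp only [hz, mulVec_sub, mulVec_smul, sub_dotProduct, dotProduct_sub,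
        smul_dotProduct, dotProduct_smul, h1, h2, h3, smul_eq_mul]
      rw [hxy]; ring
    have hnn : 0 ≤ z ⬝ᵥ G *ᵥ z := by have := hG.posSemidef.dotProduct_mulVec_nonneg z; rwa [star_trivial] at this
    nlinarith [hnn, hexp, hcpos]

theorem concentration_key_step {d : ℕ} (G H : Matrix (Fin d) (Fin d) ℝ)
    (hG : G.PosDef) (hHsymm : H.IsSymm) (κ : ℝ) (hκ : 0 < κ)
    (hle : ∀ x : Fin d → ℝ, κ * (x ⬝ᵥ G *ᵥ x) ≤ x ⬝ᵥ H *ᵥ x)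
    (βhat βstar S : Fin d → ℝ) (hS : S = H *ᵥ (βhat - βstar)) (φ : Fin d → ℝ) :
    |φ ⬝ᵥ βhat - φ ⬝ᵥ βstar| ≤
      κ⁻¹ * Real.sqrt (S ⬝ᵥ G⁻¹ *ᵥ S) * Real.sqrt (φ ⬝ᵥ G⁻¹ *ᵥ φ) := by
  set u := βhat - βstar with hu
  have hφu : φ ⬝ᵥ βhat - φ ⬝ᵥ βstar = φ ⬝ᵥ u := by
    simp [hu, dotProduct_sub]
  have hgoal : φ ⬝ᵥ βhat - φ ⬝ᵥ βstar = u ⬝ᵥ φ := by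
    rw [hφu, dotProduct_comm]
  set a := Real.sqrt (u ⬝ᵥ G *ᵥ u) with ha
  set b := Real.sqrt (S ⬝ᵥ G⁻¹ *ᵥ S) with hb
  set cc := Real.sqrt (φ ⬝ᵥ G⁻¹ *ᵥ φ) with hcc
  have hbnn : 0 ≤ b := Real.sqrt_nonneg _
  have hcnn : 0 ≤ cc := Real.sqrt_nonneg _
  have hann : 0 ≤ a := Real.sqrt_nonneg _
  have haG : 0 ≤ u ⬝ᵥ G *ᵥ u := by have := hG.posSemidef.dotProduct_mulVec_nonneg u; rwa [star_trivial] at this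
  have ha2 : a^2 = u ⬝ᵥ G *ᵥ u := Real.sq_sqrt haG
  have hb2 : b^2 = S ⬝ᵥ G⁻¹ *ᵥ S := Real.sq_sqrt (by have := hG.inv.posSemidef.dotProduct_mulVec_nonneg S; rwa [star_trivial] at this)
  have hc2 : cc^2 = φ ⬝ᵥ G⁻¹ *ᵥ φ := Real.sq_sqrt (by have := hG.inv.posSemidef.dotProduct_mulVec_nonneg φ; rwa [star_trivial] at this)
  -- Cauchy-Schwarz bounds
  have csφ : (u ⬝ᵥ φ)^2 ≤ a^2 * cc^2 := by
    rw [ha2, hc2]; exact cs_pd G hG u φ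
  have csS : (u ⬝ᵥ S)^2 ≤ a^2 * b^2 := by
    rw [ha2, hb2]; exact cs_pd G hG u S
  -- κ a² ≤ u⬝S
  have hκa : κ * a^2 ≤ u ⬝ᵥ S := by
    rw [ha2, hS]; exact hle u
  -- a ≤ κ⁻¹ b
  have hab : κ * a ≤ b := by
    have csS' : (u ⬝ᵥ S)^2 ≤ (a*b)^2 := by rw [mul_pow]; exact csS
    have h1 : u ⬝ᵥ S ≤ a * b := (abs_le_of_sq_le_sq' csS' (by positivity)).2
    rcases eq_or_lt_of_le hann with h0 | h0
    · nlinarith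
    · nlinarith
  have hφub : |u ⬝ᵥ φ| ≤ a * cc := by
    have csφ' : (u ⬝ᵥ φ)^2 ≤ (a*cc)^2 := by rw [mul_pow]; exact csφ
    have := abs_le_of_sq_le_sq' csφ' (by positivity)
    exact abs_le.mpr ⟨this.1, this.2⟩
  rw [hgoal]
  have hainv : a ≤ κ⁻¹ * b := by
    rw [inv_mul_eq_div, le_div_iff₀ hκ]; nlinarith
  calc |u ⬝ᵥ φ| ≤ a * cc := hφub
    _ ≤ (κ⁻¹ * b) * cc := by nlinarith
    _ = κ⁻¹ * b * cc := rfl
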